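/- arXiv:1006.4285 — 3 statements merged into one kernel-verified Lean document; each statement's English description precedes it below -/
import Mathlib

section
/- Let A, B be in SL(2,C) with A = [[s,1],[0,s^{-1}]], B = [[s,0],[-y,s^{-1}]], s nonzero. For each m >= 1, write (BA^{-1})^m = (v_m^{ij}) as polynomials in s^{\pm 1} and y. Then deg_y-weighted total degree satisfies: deg v_m^{11} = deg v_m^{21} = m-1 and deg v_m^{12} = deg v_m^{22} = m, where degree means total degree in s and y (with s^{-1} counted as degree-nonpositive appropriately); in particular tr((BA^{-1})^m) has degree m and its top-degree term does not involve s. -/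
noncomputable section

/-- The ring of Laurent polynomials in `s` and ordinary polynomials in `y`
over `ℂ`, i.e. `ℂ[s^{±1}, y]`. -/
abbrev R2 : Type := AddMonoidAlgebra ℂ (ℤ × ℕ)

/-- The variable `s`. -/
def s : R2 := AddMonoidAlgebra.single (1, 0) 1
/-- The inverse variable `s⁻¹`. -/
def sInv : R2 := AddMonoidAlgebra.single (-1, 0) 1
/-- The variable `y`. -/
def y : R2 := AddMonoidAlgebra.single (0, 1) 1

/-- `A = [[s,1],[0,s⁻¹]]`. -/
def A : Matrix (Fin 2) (Fin 2) R2 := !![s, 1; 0, sInv]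
/-- `B = [[s,0],[-y,s⁻¹]]`. -/
def B : Matrix (Fin 2) (Fin 2) R2 := !![s, 0; -y, sInv]


/-- The total degree of a Laurent polynomial in `s` and `y`: the maximum over monomials of
(exponent of `s`) + (exponent of `y`), negative powers of `s` counting negatively. -/
def deg (f : R2) : WithBot ℤ := f.coeff.support.sup fun p => ((p.1 + (p.2 : ℤ)) : WithBot ℤ)

lemma detA : A.det = 1 := by
  rw [A, Matrix.det_fin_two_of]
  simp [s, sInv, AddMonoidAlgebra.single_mul_single, AddMonoidAlgebra.one_def, Prod.ext_iff]
  rfl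

lemma hM : B * A⁻¹ = !![(AddMonoidAlgebra.single ((0:ℤ),(0:ℕ)) (1:ℂ) : R2),
      AddMonoidAlgebra.single (1,0) (-1);
      AddMonoidAlgebra.single (-1,1) (-1),
      AddMonoidAlgebra.single (0,1) 1 + AddMonoidAlgebra.single (0,0) 1] := by
  rw [Matrix.inv_def, detA, Ring.inverse_one, one_smul, A, Matrix.adjugate_fin_two_of, B,
    Matrix.mul_fin_two]
  ext i j
  fin_cases i <;> fin_cases j <;>
    simp [s, sInv, y, AddMonoidAlgebra.single_mul_single, Finsupp.single_neg, Prod.ext_iff,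
      Finsupp.neg_apply]
  all_goals rfl

lemma deg_le_iff {f : R2} {n : ℤ} :
    deg f ≤ (n : WithBot ℤ) ↔ ∀ p ∈ f.coeff.support, p.1 + (p.2 : ℤ) ≤ n := by
  rw [deg, Finset.sup_le_iff]
  exact forall₂_congr fun p _ => WithBot.coe_le_coe

lemma le_deg {f : R2} {p : ℤ × ℕ} (h : p ∈ f.coeff.support) :
    ((p.1 + (p.2 : ℤ) : ℤ) : WithBot ℤ) ≤ deg f :=
  Finset.le_sup (f := fun p : ℤ × ℕ => ((p.1 + (p.2 : ℤ)) : WithBot ℤ)) h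

lemma coeff_zero_of_deg {f : R2} {n : ℤ} (hf : deg f ≤ (n : WithBot ℤ)) {p : ℤ × ℕ}
    (hp : n < p.1 + (p.2 : ℤ)) : f.coeff p = 0 := by
  by_contra h
  exact absurd (deg_le_iff.1 hf p (Finsupp.mem_support_iff.2 h)) (not_le.2 hp)

lemma deg_eq {f : R2} {n : ℤ} (h1 : deg f ≤ (n : WithBot ℤ)) {p : ℤ × ℕ}
    (hp : f.coeff p ≠ 0) (hs : p.1 + (p.2 : ℤ) = n) : deg f = (n : WithBot ℤ) :=
  le_antisymm h1 (hs ▸ le_deg (Finsupp.mem_support_iff.2 hp))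

lemma deg_add_le {f g : R2} {n : ℤ} (hf : deg f ≤ (n : WithBot ℤ)) (hg : deg g ≤ (n : WithBot ℤ)) :
    deg (f + g) ≤ (n : WithBot ℤ) := by
  rw [deg_le_iff] at *
  intro p hp
  rcases Finset.mem_union.1 (Finsupp.support_add hp) with h | h
  exacts [hf p h, hg p h]

lemma mem_support_mul_single {f : R2} {a : ℤ × ℕ} {c : ℂ} {p : ℤ × ℕ}
    (hp : p ∈ (f * AddMonoidAlgebra.single a c).coeff.support) : ∃ q ∈ f.coeff.support, q + a = p := by
  classical
  rcases Finset.mem_add.1 (AddMonoidAlgebra.support_coeff_mul_subset f (AddMonoidAlgebra.single a c) hp)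
    with ⟨q, hq, r, hr, hqr⟩
  have : r = a := Finset.mem_singleton.1 (Finsupp.support_single_subset hr)
  exact ⟨q, hq, this ▸ hqr⟩

lemma deg_mul_single_le {f : R2} {n : ℤ} (hf : deg f ≤ (n : WithBot ℤ)) (a : ℤ × ℕ) (c : ℂ) :
    deg (f * AddMonoidAlgebra.single a c) ≤ ((n + a.1 + a.2 : ℤ) : WithBot ℤ) := by
  rw [deg_le_iff]
  intro p hp
  rcases mem_support_mul_single hp with ⟨q, hq, rfl⟩
  have := deg_le_iff.1 hf q hq
  simp only [Prod.fst_add, Prod.snd_add]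
  push_cast
  omega

lemma coeff_mul_single (f : R2) (c : ℂ) (a q : ℤ × ℕ) :
    (f * AddMonoidAlgebra.single a c).coeff (q + a) = f.coeff q * c :=
  AddMonoidAlgebra.coeff_mul_single_eq_coeff_mul (x := f) (r := c) q (fun _ _ => add_left_inj a)

lemma deg_single_le (a : ℤ × ℕ) (c : ℂ) :
    deg (AddMonoidAlgebra.single a c) ≤ ((a.1 + a.2 : ℤ) : WithBot ℤ) :=
  deg_le_iff.2 fun p hp => by
    have := Finsupp.support_single_subset hp
    simp only [Finset.mem_singleton] at this
    subst this
    exact le_refl _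

lemma deg_mono {f : R2} {a b : ℤ} (h : deg f ≤ (a : WithBot ℤ)) (hab : a ≤ b) :
    deg f ≤ (b : WithBot ℤ) := h.trans (WithBot.coe_le_coe.2 hab)

lemma key : ∀ m : ℕ, 1 ≤ m →
    deg (((B * A⁻¹) ^ m) 0 0) ≤ (((m : ℤ) - 1 : ℤ) : WithBot ℤ) ∧
    (((B * A⁻¹) ^ m) 0 0).coeff (0, m - 1) = 1 ∧
    deg (((B * A⁻¹) ^ m) 1 0) ≤ (((m : ℤ) - 1 : ℤ) : WithBot ℤ) ∧
    (((B * A⁻¹) ^ m) 1 0).coeff (-1, m) = -1 ∧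
    deg (((B * A⁻¹) ^ m) 0 1) ≤ ((m : ℤ) : WithBot ℤ) ∧
    (((B * A⁻¹) ^ m) 0 1).coeff (1, m - 1) = -1 ∧
    deg (((B * A⁻¹) ^ m) 1 1) ≤ ((m : ℤ) : WithBot ℤ) ∧
    (((B * A⁻¹) ^ m) 1 1).coeff (0, m) = 1 ∧
    ∀ p ∈ (((B * A⁻¹) ^ m) 1 1).coeff.support, p.1 + (p.2 : ℤ) = (m : ℤ) → p = (0, m) := by
  intro m hm'
  induction m, hm' using Nat.le_induction with
  | base =>
    have E : (B * A⁻¹) ^ 1 = !![(AddMonoidAlgebra.single ((0:ℤ),(0:ℕ)) (1:ℂ) : R2),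
        AddMonoidAlgebra.single (1,0) (-1);
        AddMonoidAlgebra.single (-1,1) (-1),
        AddMonoidAlgebra.single (0,1) 1 + AddMonoidAlgebra.single (0,0) 1] := by
      rw [pow_one, hM]
    have E00 : ((B * A⁻¹) ^ 1) 0 0 = AddMonoidAlgebra.single ((0:ℤ),(0:ℕ)) (1:ℂ) := by
      rw [E]; simp
    have E01 : ((B * A⁻¹) ^ 1) 0 1 = AddMonoidAlgebra.single ((1:ℤ),(0:ℕ)) (-1:ℂ) := by
      rw [E]; simp
    have E10 : ((B * A⁻¹) ^ 1) 1 0 = AddMonoidAlgebra.single ((-1:ℤ),(1:ℕ)) (-1:ℂ) := by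
      rw [E]; simp
    have E11 : ((B * A⁻¹) ^ 1) 1 1
        = AddMonoidAlgebra.single ((0:ℤ),(1:ℕ)) (1:ℂ) + AddMonoidAlgebra.single (0,0) 1 := by
      rw [E]; simp
    refine ⟨?_, ?_, ?_, ?_, ?_, ?_, ?_, ?_, ?_⟩
    · rw [E00]; exact deg_mono (deg_single_le _ _) (by norm_num)
    · rw [E00]; simp [Finsupp.single_apply]
    · rw [E10]; exact deg_mono (deg_single_le _ _) (by norm_num)
    · rw [E10]; simp [Finsupp.single_apply]
    · rw [E01]; exact deg_mono (deg_single_le _ _) (by norm_num)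
    · rw [E01]; simp [Finsupp.single_apply]
    · rw [E11]
      exact deg_add_le (deg_mono (deg_single_le _ _) (by norm_num))
        (deg_mono (deg_single_le _ _) (by norm_num))
    · rw [E11, AddMonoidAlgebra.coeff_add, Finsupp.add_apply]
      simp [Finsupp.single_apply, Prod.ext_iff]
    · rw [E11]
      intro p hp hs
      rcases Finset.mem_union.1 (Finsupp.support_add hp) with h | h <;>
      · have hpe := Finsupp.support_single_subset h
        simp only [Finset.mem_singleton] at hpe
        subst hpe
        simp_all
  | succ m hm ih =>
    obtain ⟨d11, c11, d21, c21, d12, c12, d22, c22, u22⟩ := ih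
    set e11 : R2 := AddMonoidAlgebra.single ((0:ℤ),(0:ℕ)) (1:ℂ) with he11
    set e12 : R2 := AddMonoidAlgebra.single ((1:ℤ),(0:ℕ)) (-1:ℂ) with he12
    set e21 : R2 := AddMonoidAlgebra.single ((-1:ℤ),(1:ℕ)) (-1:ℂ) with he21
    set ey : R2 := AddMonoidAlgebra.single ((0:ℤ),(1:ℕ)) (1:ℂ) with hey
    set ec : R2 := AddMonoidAlgebra.single ((0:ℤ),(0:ℕ)) (1:ℂ) with hec
    set v11 := ((B * A⁻¹) ^ m) 0 0
    set v12 := ((B * A⁻¹) ^ m) 0 1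
    set v21 := ((B * A⁻¹) ^ m) 1 0
    set v22 := ((B * A⁻¹) ^ m) 1 1
    have hpow : (B * A⁻¹) ^ (m + 1) = ((B * A⁻¹) ^ m) *
        !![e11, e12; e21, ey + ec] := by rw [← hM, pow_succ]
    have h00 : ((B * A⁻¹) ^ (m + 1)) 0 0 = v11 * e11 + v12 * e21 := by
      rw [hpow]; simp [Matrix.mul_apply, Fin.sum_univ_two]; rfl
    have h10 : ((B * A⁻¹) ^ (m + 1)) 1 0 = v21 * e11 + v22 * e21 := by
      rw [hpow]; simp [Matrix.mul_apply, Fin.sum_univ_two]; rfl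
    have h01 : ((B * A⁻¹) ^ (m + 1)) 0 1 = v11 * e12 + (v12 * ey + v12 * ec) := by
      rw [hpow]; simp [Matrix.mul_apply, Fin.sum_univ_two, mul_add]; rfl
    have h11 : ((B * A⁻¹) ^ (m + 1)) 1 1 = v21 * e12 + (v22 * ey + v22 * ec) := by
      rw [hpow]; simp [Matrix.mul_apply, Fin.sum_univ_two, mul_add]; rfl
    -- vanishing coefficients
    have z11 : v11.coeff (0, m) = 0 := coeff_zero_of_deg d11 (by push_cast; omega)
    have z21 : v21.coeff (-1, m + 1) = 0 := coeff_zero_of_deg d21 (by push_cast; omega)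
    have z12 : v12.coeff (1, m) = 0 := coeff_zero_of_deg d12 (by push_cast; omega)
    have z22 : v22.coeff (0, m + 1) = 0 := coeff_zero_of_deg d22 (by push_cast; omega)
    have hm1 : m - 1 + 1 = m := Nat.sub_add_cancel hm
    refine ⟨?_, ?_, ?_, ?_, ?_, ?_, ?_, ?_, ?_⟩
    · rw [h00]
      refine deg_add_le (deg_mono (deg_mul_single_le d11 _ _) (by push_cast; omega))
        (deg_mono (deg_mul_single_le d12 _ _) (by push_cast; omega))
    · rw [h00, Nat.add_sub_cancel, AddMonoidAlgebra.coeff_add, Finsupp.add_apply]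
      have e1 : ((0:ℤ), m) = ((0:ℤ), m) + ((0:ℤ), (0:ℕ)) := by simp
      have e2 : ((0:ℤ), m) = ((1:ℤ), m - 1) + ((-1:ℤ), (1:ℕ)) := by
        simp [Prod.ext_iff]; omega
      rw [he11, he21]
      rw [show (v11 * AddMonoidAlgebra.single ((0:ℤ),(0:ℕ)) (1:ℂ)).coeff ((0:ℤ), m)
            = v11.coeff ((0:ℤ), m) * 1 from e1 ▸ coeff_mul_single v11 1 _ _,
          show (v12 * AddMonoidAlgebra.single ((-1:ℤ),(1:ℕ)) (-1:ℂ)).coeff ((0:ℤ), m)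
            = v12.coeff ((1:ℤ), m - 1) * (-1) from e2 ▸ coeff_mul_single v12 (-1) _ _,
          z11, c12]
      ring
    · rw [h10]
      refine deg_add_le (deg_mono (deg_mul_single_le d21 _ _) (by push_cast; omega))
        (deg_mono (deg_mul_single_le d22 _ _) (by push_cast; omega))
    · rw [h10, AddMonoidAlgebra.coeff_add, Finsupp.add_apply]
      have e1 : ((-1:ℤ), m + 1) = ((-1:ℤ), m + 1) + ((0:ℤ), (0:ℕ)) := by simp
      have e2 : ((-1:ℤ), m + 1) = ((0:ℤ), m) + ((-1:ℤ), (1:ℕ)) := by simp [Prod.ext_iff]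
      rw [he11, he21]
      rw [show (v21 * AddMonoidAlgebra.single ((0:ℤ),(0:ℕ)) (1:ℂ)).coeff ((-1:ℤ), m + 1)
            = v21.coeff ((-1:ℤ), m + 1) * 1 from e1 ▸ coeff_mul_single v21 1 _ _,
          show (v22 * AddMonoidAlgebra.single ((-1:ℤ),(1:ℕ)) (-1:ℂ)).coeff ((-1:ℤ), m + 1)
            = v22.coeff ((0:ℤ), m) * (-1) from e2 ▸ coeff_mul_single v22 (-1) _ _,
          z21, c22]
      ring
    · rw [h01]
      refine deg_add_le (deg_mono (deg_mul_single_le d11 _ _) (by push_cast; omega))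
        (deg_add_le (deg_mono (deg_mul_single_le d12 _ _) (by push_cast; omega))
          (deg_mono (deg_mul_single_le d12 _ _) (by push_cast; omega)))
    · rw [h01, Nat.add_sub_cancel, AddMonoidAlgebra.coeff_add, AddMonoidAlgebra.coeff_add,
        Finsupp.add_apply, Finsupp.add_apply]
      have e1 : ((1:ℤ), m) = ((0:ℤ), m) + ((1:ℤ), (0:ℕ)) := by simp
      have e2 : ((1:ℤ), m) = ((1:ℤ), m - 1) + ((0:ℤ), (1:ℕ)) := by
        simp [Prod.ext_iff]; omega
      have e3 : ((1:ℤ), m) = ((1:ℤ), m) + ((0:ℤ), (0:ℕ)) := by simp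
      rw [he12, hey, hec]
      rw [show (v11 * AddMonoidAlgebra.single ((1:ℤ),(0:ℕ)) (-1:ℂ)).coeff ((1:ℤ), m)
            = v11.coeff ((0:ℤ), m) * (-1) from e1 ▸ coeff_mul_single v11 (-1) _ _,
          show (v12 * AddMonoidAlgebra.single ((0:ℤ),(1:ℕ)) (1:ℂ)).coeff ((1:ℤ), m)
            = v12.coeff ((1:ℤ), m - 1) * 1 from e2 ▸ coeff_mul_single v12 1 _ _,
          show (v12 * AddMonoidAlgebra.single ((0:ℤ),(0:ℕ)) (1:ℂ)).coeff ((1:ℤ), m)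
            = v12.coeff ((1:ℤ), m) * 1 from e3 ▸ coeff_mul_single v12 1 _ _,
          z11, z12, c12]
      ring
    · rw [h11]
      refine deg_add_le (deg_mono (deg_mul_single_le d21 _ _) (by push_cast; omega))
        (deg_add_le (deg_mono (deg_mul_single_le d22 _ _) (by push_cast; omega))
          (deg_mono (deg_mul_single_le d22 _ _) (by push_cast; omega)))
    · rw [h11, AddMonoidAlgebra.coeff_add, AddMonoidAlgebra.coeff_add,
        Finsupp.add_apply, Finsupp.add_apply]
      have e1 : ((0:ℤ), m + 1) = ((-1:ℤ), m + 1) + ((1:ℤ), (0:ℕ)) := by simp [Prod.ext_iff]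
      have e2 : ((0:ℤ), m + 1) = ((0:ℤ), m) + ((0:ℤ), (1:ℕ)) := by simp [Prod.ext_iff]
      have e3 : ((0:ℤ), m + 1) = ((0:ℤ), m + 1) + ((0:ℤ), (0:ℕ)) := by simp
      rw [he12, hey, hec]
      rw [show (v21 * AddMonoidAlgebra.single ((1:ℤ),(0:ℕ)) (-1:ℂ)).coeff ((0:ℤ), m + 1)
            = v21.coeff ((-1:ℤ), m + 1) * (-1) from e1 ▸ coeff_mul_single v21 (-1) _ _,
          show (v22 * AddMonoidAlgebra.single ((0:ℤ),(1:ℕ)) (1:ℂ)).coeff ((0:ℤ), m + 1)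
            = v22.coeff ((0:ℤ), m) * 1 from e2 ▸ coeff_mul_single v22 1 _ _,
          show (v22 * AddMonoidAlgebra.single ((0:ℤ),(0:ℕ)) (1:ℂ)).coeff ((0:ℤ), m + 1)
            = v22.coeff ((0:ℤ), m + 1) * 1 from e3 ▸ coeff_mul_single v22 1 _ _,
          z21, z22, c22]
      ring
    · rw [h11]
      intro p hp hs
      rcases Finset.mem_union.1 (Finsupp.support_add hp) with h | h
      · rcases mem_support_mul_single h with ⟨q, hq, rfl⟩
        have := deg_le_iff.1 d21 q hq
        exfalso
        simp only [Prod.fst_add, Prod.snd_add] at hs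
        push_cast at hs this ⊢
        omega
      · rcases Finset.mem_union.1 (Finsupp.support_add h) with h' | h'
        · rcases mem_support_mul_single h' with ⟨q, hq, rfl⟩
          have hle := deg_le_iff.1 d22 q hq
          have hq0 : q = (0, m) := by
            apply u22 q hq
            simp only [Prod.fst_add, Prod.snd_add] at hs
            push_cast at hs hle ⊢
            omega
          subst hq0
          simp [Prod.ext_iff]
        · rcases mem_support_mul_single h' with ⟨q, hq, rfl⟩
          have := deg_le_iff.1 d22 q hq
          exfalso
          simp only [Prod.fst_add, Prod.snd_add] at hs
          push_cast at hs this ⊢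
          omega

/-- Degrees of the entries `v_m^{ij}` of `(B A⁻¹)^m`: `deg v^{11} = deg v^{21} = m - 1`,
`deg v^{12} = deg v^{22} = m`; in particular `tr((B A⁻¹)^m)` has degree `m` and its
top-degree term does not involve `s`. -/
theorem stmt_4 (m : ℕ) (hm : 1 ≤ m) :
    deg (((B * A⁻¹) ^ m) 0 0) = ((m : ℤ) - 1 : ℤ) ∧
    deg (((B * A⁻¹) ^ m) 1 0) = ((m : ℤ) - 1 : ℤ) ∧
    deg (((B * A⁻¹) ^ m) 0 1) = (m : ℤ) ∧
    deg (((B * A⁻¹) ^ m) 1 1) = (m : ℤ) ∧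
    deg (((B * A⁻¹) ^ m).trace) = (m : ℤ) ∧
    ∀ p ∈ (((B * A⁻¹) ^ m).trace).coeff.support, p.1 + (p.2 : ℤ) = (m : ℤ) → p.1 = 0 := by
  obtain ⟨d11, c11, d21, c21, d12, c12, d22, c22, u22⟩ := key m hm
  have htr : ((B * A⁻¹) ^ m).trace = ((B * A⁻¹) ^ m) 0 0 + ((B * A⁻¹) ^ m) 1 1 :=
    Matrix.trace_fin_two _
  refine ⟨?_, ?_, ?_, ?_, ?_, ?_⟩
  · exact deg_eq d11 (c11 ▸ one_ne_zero) (by push_cast; omega)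
  · exact deg_eq d21 (c21 ▸ neg_ne_zero.2 one_ne_zero) (by push_cast; omega)
  · exact deg_eq d12 (c12 ▸ neg_ne_zero.2 one_ne_zero) (by push_cast; omega)
  · exact deg_eq d22 (c22 ▸ one_ne_zero) (by push_cast; omega)
  · rw [htr]
    refine deg_eq (deg_add_le (deg_mono d11 (by omega)) d22) (p := (0, m)) ?_ (by push_cast; omega)
    rw [AddMonoidAlgebra.coeff_add, Finsupp.add_apply, coeff_zero_of_deg d11 (by push_cast; omega), c22]
    simp
  · rw [htr]
    intro p hp hs
    rcases Finset.mem_union.1 (Finsupp.support_add hp) with h | h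
    · have := deg_le_iff.1 d11 p h
      omega
    · exact congrArg Prod.fst (u22 p h hs)
end
end

section
/- Let A = [[s,1],[0,s^{-1}]] and B = [[s,0],[-y,s^{-1}]] in SL(2,C[s^{\pm1},y]). For m >= 1 define W_m = (BA^{-1})^m (B^{-1}A)^m with entries w_m^{ij}. Then deg w_m^{11} = deg w_m^{21} = 2m+1 and deg w_m^{12} = deg w_m^{22} = 2m; in particular deg(tr W_m) = 2m+1. -/
noncomputable section

/-- `W_m = (B A⁻¹)^m (B⁻¹ A)^m`. -/
def W (m : ℕ) : Matrix (Fin 2) (Fin 2) R2 := (B * A⁻¹) ^ m * (B⁻¹ * A) ^ m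

open AddMonoidAlgebra

abbrev sg (p : ℤ × ℕ) (c : ℂ) : R2 := AddMonoidAlgebra.single p c

def DegLe (f : R2) (d : ℤ) : Prop := ∀ q ∈ f.coeff.support, (q.1 + (q.2 : ℤ)) ≤ d
def DegLt (f : R2) (d : ℤ) : Prop := ∀ q ∈ f.coeff.support, (q.1 + (q.2 : ℤ)) < d

lemma DegLt.degLe {f : R2} {d : ℤ} (h : DegLt f d) : DegLe f d := fun q hq => (h q hq).le
lemma DegLe.degLt {f : R2} {d d' : ℤ} (h : DegLe f d) (hd : d < d') : DegLt f d' :=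
  fun q hq => lt_of_le_of_lt (h q hq) hd
lemma DegLt.mono {f : R2} {d d' : ℤ} (h : DegLt f d) (hd : d ≤ d') : DegLt f d' :=
  fun q hq => lt_of_lt_of_le (h q hq) hd

lemma degLe_single {p : ℤ × ℕ} {c : ℂ} {d : ℤ} (h : p.1 + (p.2 : ℤ) ≤ d) :
    DegLe (sg p c) d := by
  intro q hq
  have := Finsupp.support_single_subset (a := p) (b := c) hq
  simp only [Finset.mem_singleton] at this
  subst this; exact h

lemma degLt_single {p : ℤ × ℕ} {c : ℂ} {d : ℤ} (h : p.1 + (p.2 : ℤ) < d) :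
    DegLt (sg p c) d := by
  intro q hq
  have := Finsupp.support_single_subset (a := p) (b := c) hq
  simp only [Finset.mem_singleton] at this
  subst this; exact h

lemma degLt_add {f g : R2} {d : ℤ} (hf : DegLt f d) (hg : DegLt g d) : DegLt (f + g) d := by
  intro q hq
  have := Finsupp.support_add (g₁ := f.coeff) (g₂ := g.coeff) hq
  rcases Finset.mem_union.mp this with h | h
  · exact hf q h
  · exact hg q h

lemma degLe_add {f g : R2} {d : ℤ} (hf : DegLe f d) (hg : DegLe g d) : DegLe (f + g) d := by
  intro q hq
  have := Finsupp.support_add (g₁ := f.coeff) (g₂ := g.coeff) hq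
  rcases Finset.mem_union.mp this with h | h
  · exact hf q h
  · exact hg q h

lemma degLe_mul {f g : R2} {a b : ℤ} (hf : DegLe f a) (hg : DegLe g b) :
    DegLe (f * g) (a + b) := by
  intro q hq
  have := AddMonoidAlgebra.support_coeff_mul_subset f g hq
  rcases Finset.mem_add.mp this with ⟨u, hu, v, hv, rfl⟩
  have h1 := hf u hu
  have h2 := hg v hv
  simp only [Prod.fst_add, Prod.snd_add]
  push_cast
  linarith

lemma degLt_mul_le_lt {f g : R2} {a b : ℤ} (hf : DegLe f a) (hg : DegLt g b) :
    DegLt (f * g) (a + b) := by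
  intro q hq
  have := AddMonoidAlgebra.support_coeff_mul_subset f g hq
  rcases Finset.mem_add.mp this with ⟨u, hu, v, hv, rfl⟩
  have h1 := hf u hu
  have h2 := hg v hv
  simp only [Prod.fst_add, Prod.snd_add]
  push_cast
  linarith

lemma degLt_mul_lt_le {f g : R2} {a b : ℤ} (hf : DegLt f a) (hg : DegLe g b) :
    DegLt (f * g) (a + b) := by
  intro q hq
  have := AddMonoidAlgebra.support_coeff_mul_subset f g hq
  rcases Finset.mem_add.mp this with ⟨u, hu, v, hv, rfl⟩
  have h1 := hf u hu
  have h2 := hg v hv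
  simp only [Prod.fst_add, Prod.snd_add]
  push_cast
  linarith

lemma deg_eq_s5 {p : ℤ × ℕ} {c : ℂ} {r : R2} {d : ℤ} (hc : c ≠ 0)
    (hr : DegLt r (p.1 + (p.2 : ℤ))) (hd : p.1 + (p.2 : ℤ) = d) :
    deg (sg p c + r) = (d : WithBot ℤ) := by
  subst hd
  have hrp : r.coeff p = 0 := by
    by_contra h
    exact lt_irrefl _ (hr p (Finsupp.mem_support_iff.mpr h))
  apply le_antisymm
  · apply Finset.sup_le
    intro q hq
    have := Finsupp.support_add (g₁ := (sg p c).coeff) (g₂ := r.coeff) hq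
    rcases Finset.mem_union.mp this with h | h
    · have := Finsupp.support_single_subset (a := p) (b := c) h
      simp only [Finset.mem_singleton] at this
      subst this
      exact le_refl _
    · exact_mod_cast (hr q h).le
  · have hp : p ∈ (sg p c + r).coeff.support := by
      rw [Finsupp.mem_support_iff]
      rw [coeff_add, Finsupp.add_apply, hrp, add_zero, coeff_single, Finsupp.single_eq_same]
      exact hc
    exact Finset.le_sup (f := fun q => ((q.1 + (q.2 : ℤ)) : WithBot ℤ)) hp

lemma sg_mul_sg (p q : ℤ × ℕ) (a b : ℂ) : sg p a * sg q b = sg (p + q) (a * b) :=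
  AddMonoidAlgebra.single_mul_single ..

lemma s_mul_sInv : s * sInv = 1 := by
  rw [s, sInv, AddMonoidAlgebra.single_mul_single]
  norm_num
  rfl

lemma sInv_mul_s : sInv * s = 1 := by
  rw [sInv, s, AddMonoidAlgebra.single_mul_single]
  norm_num
  rfl

lemma A_inv : A⁻¹ = !![sInv, -1; 0, s] := by
  apply Matrix.inv_eq_right_inv
  rw [A, Matrix.mul_fin_two, Matrix.one_fin_two]
  simp [s_mul_sInv, sInv_mul_s, mul_comm sInv s]

lemma B_inv : B⁻¹ = !![sInv, 0; y, s] := by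
  apply Matrix.inv_eq_right_inv
  rw [B, Matrix.mul_fin_two, Matrix.one_fin_two]
  simp [s_mul_sInv, sInv_mul_s, mul_comm y sInv]

lemma C_eq : B * A⁻¹ = !![1, -s; -(y * sInv), y + 1] := by
  rw [A_inv, B, Matrix.mul_fin_two]
  simp [s_mul_sInv, sInv_mul_s]

lemma D_eq : B⁻¹ * A = !![1, sInv; y * s, y + 1] := by
  rw [B_inv, A, Matrix.mul_fin_two]
  simp [s_mul_sInv, sInv_mul_s]

lemma neg_s : -s = sg (1,0) (-1) := by
  rw [s]; exact (AddMonoidAlgebra.single_neg _ _).symm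

lemma one_eq : (1 : R2) = sg 0 1 := AddMonoidAlgebra.one_def

lemma pr_eq {a c : ℤ} {b d : ℕ} (h1 : a = c) (h2 : b = d) : ((a,b) : ℤ × ℕ) = (c,d) := by
  rw [h1, h2]

lemma sg_congr {p q : ℤ × ℕ} {a b : ℂ} (h1 : p = q) (h2 : a = b) : sg p a = sg q b := by
  rw [h1, h2]

lemma C_eq' : B * A⁻¹ = !![1, sg (1,0) (-1); sg (-1,1) (-1), sg (0,1) 1 + 1] := by
  rw [C_eq]
  have h1 : -(y * sInv) = sg (-1,1) (-1) := by
    rw [y, sInv, AddMonoidAlgebra.single_mul_single]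
    rw [show sg (-1,1) (-1) = -sg (-1,1) 1 from AddMonoidAlgebra.single_neg _ _, neg_inj]
    exact sg_congr (pr_eq (by norm_num) (by norm_num)) (by norm_num)
  rw [h1, neg_s, y]

lemma D_eq' : B⁻¹ * A = !![1, sg (-1,0) 1; sg (1,1) 1, sg (0,1) 1 + 1] := by
  rw [D_eq]
  have h1 : y * s = sg (1,1) 1 := by
    rw [y, s, AddMonoidAlgebra.single_mul_single]
    exact sg_congr (pr_eq (by norm_num) (by norm_num)) (by norm_num)
  rw [h1, y, sInv]

lemma degLe_sg (a : ℤ) (b : ℕ) (c : ℂ) {d : ℤ} (h : a + (b : ℤ) ≤ d) :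
    DegLe (sg (a,b) c) d := degLe_single h

lemma degLt_sg (a : ℤ) (b : ℕ) (c : ℂ) {d : ℤ} (h : a + (b : ℤ) < d) :
    DegLt (sg (a,b) c) d := degLt_single h

lemma mul3_apply (C M D : Matrix (Fin 2) (Fin 2) R2) (i j : Fin 2) :
    (C * M * D) i j = C i 0 * M 0 0 * D 0 j + C i 0 * M 0 1 * D 1 j +
      C i 1 * M 1 0 * D 0 j + C i 1 * M 1 1 * D 1 j := by
  simp [Matrix.mul_apply, Fin.sum_univ_two]
  ring

lemma mul2_apply (C D : Matrix (Fin 2) (Fin 2) R2) (i j : Fin 2) :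
    (C * D) i j = C i 0 * D 0 j + C i 1 * D 1 j := by
  simp [Matrix.mul_apply, Fin.sum_univ_two]

lemma W_succ (m : ℕ) : W (m + 1) = (B * A⁻¹) * W m * (B⁻¹ * A) := by
  rw [W, W, pow_succ', pow_succ]
  simp only [mul_assoc]

def Good (n : ℕ) (M : Matrix (Fin 2) (Fin 2) R2) : Prop :=
  (∃ r, M 0 0 = sg (2, 2*n+1) (-1) + r ∧ DegLt r (2*(n:ℤ)+3)) ∧
  (∃ r, M 0 1 = sg (1, 2*n+1) (-1) + r ∧ DegLt r (2*(n:ℤ)+2)) ∧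
  (∃ r, M 1 0 = sg (1, 2*n+2) 1 + r ∧ DegLt r (2*(n:ℤ)+3)) ∧
  (∃ r, M 1 1 = sg (0, 2*n+2) 1 + r ∧ DegLt r (2*(n:ℤ)+2))

lemma degLe_one : DegLe (1 : R2) 0 := by
  rw [one_eq]
  exact degLe_single (by norm_num)

lemma sg_key3 {a₁ a₂ a₃ c : ℤ} {b₁ b₂ b₃ e : ℕ} {x₁ x₂ x₃ z : ℂ}
    (h1 : a₁ + a₂ + a₃ = c) (h2 : b₁ + b₂ + b₃ = e) (h3 : x₁ * x₂ * x₃ = z) :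
    sg (a₁,b₁) x₁ * sg (a₂,b₂) x₂ * sg (a₃,b₃) x₃ = sg (c,e) z := by
  rw [sg_mul_sg, sg_mul_sg, Prod.mk_add_mk, Prod.mk_add_mk]
  exact sg_congr (pr_eq h1 h2) h3

lemma sg_key2 {a₁ a₂ c : ℤ} {b₁ b₂ e : ℕ} {x₁ x₂ z : ℂ}
    (h1 : a₁ + a₂ = c) (h2 : b₁ + b₂ = e) (h3 : x₁ * x₂ = z) :
    sg (a₁,b₁) x₁ * sg (a₂,b₂) x₂ = sg (c,e) z := by
  rw [sg_mul_sg, Prod.mk_add_mk]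
  exact sg_congr (pr_eq h1 h2) h3

lemma good_base : Good 0 (W 1) := by
  have hW1 : W 1 = (B * A⁻¹) * (B⁻¹ * A) := by rw [W, pow_one, pow_one]
  refine ⟨⟨1, ?_, ?_⟩, ⟨sg (-1,0) 1 + sg (1,0) (-1), ?_, ?_⟩,
    ⟨sg (-1,1) (-1) + sg (1,1) 1, ?_, ?_⟩,
    ⟨sg (-2,1) (-1) + sg (0,1) 1 + sg (0,1) 1 + 1, ?_, ?_⟩⟩
  · rw [hW1, mul2_apply, C_eq', D_eq']
    simp only [Matrix.of_apply, Matrix.cons_val_zero, Matrix.cons_val_one, Matrix.head_cons,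
      Matrix.cons_val', Matrix.empty_val', Matrix.cons_val_fin_one, Matrix.head_fin_const]
    linear_combination (sg_key2 (by ring) (by ring) (by ring) :
      sg (1,0) (-1) * sg (1,1) 1 = sg (2, 2*0+1) (-1))
  · exact degLe_one.degLt (by norm_num)
  · rw [hW1, mul2_apply, C_eq', D_eq']
    simp only [Matrix.of_apply, Matrix.cons_val_zero, Matrix.cons_val_one, Matrix.head_cons,
      Matrix.cons_val', Matrix.empty_val', Matrix.cons_val_fin_one, Matrix.head_fin_const]
    linear_combination (sg_key2 (by ring) (by ring) (by ring) :
      sg (1,0) (-1) * sg (0,1) 1 = sg (1, 2*0+1) (-1))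
  · exact degLt_add (degLt_sg _ _ _ (by norm_num)) (degLt_sg _ _ _ (by norm_num))
  · rw [hW1, mul2_apply, C_eq', D_eq']
    simp only [Matrix.of_apply, Matrix.cons_val_zero, Matrix.cons_val_one, Matrix.head_cons,
      Matrix.cons_val', Matrix.empty_val', Matrix.cons_val_fin_one, Matrix.head_fin_const]
    linear_combination (sg_key2 (by ring) (by ring) (by ring) :
      sg (0,1) 1 * sg (1,1) 1 = sg (1, 2*0+2) 1)
  · exact degLt_add (degLt_sg _ _ _ (by norm_num)) (degLt_sg _ _ _ (by norm_num))
  · rw [hW1, mul2_apply, C_eq', D_eq']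
    simp only [Matrix.of_apply, Matrix.cons_val_zero, Matrix.cons_val_one, Matrix.head_cons,
      Matrix.cons_val', Matrix.empty_val', Matrix.cons_val_fin_one, Matrix.head_fin_const]
    linear_combination (sg_key2 (by ring) (by ring) (by ring) :
      sg (-1,1) (-1) * sg (-1,0) 1 = sg (-2,1) (-1)) +
      (sg_key2 (by ring) (by ring) (by ring) :
      sg (0,1) 1 * sg (0,1) 1 = sg (0, 2*0+2) 1)
  · refine degLt_add (degLt_add (degLt_add ?_ ?_) ?_) (degLe_one.degLt (by norm_num)) <;>
      exact degLt_sg _ _ _ (by norm_num)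

lemma good_step (n : ℕ) (M : Matrix (Fin 2) (Fin 2) R2) (h : Good n M) :
    Good (n+1) ((B * A⁻¹) * M * (B⁻¹ * A)) := by
  obtain ⟨⟨r00, h00, hr00⟩, ⟨r01, h01, hr01⟩, ⟨r10, h10, hr10⟩, ⟨r11, h11, hr11⟩⟩ := h
  have H00 : DegLe (M 0 0) (2*(n:ℤ)+3) := by
    rw [h00]; exact degLe_add (degLe_sg _ _ _ (by push_cast; omega)) hr00.degLe
  have H01 : DegLe (M 0 1) (2*(n:ℤ)+2) := by
    rw [h01]; exact degLe_add (degLe_sg _ _ _ (by push_cast; omega)) hr01.degLe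
  have H10 : DegLe (M 1 0) (2*(n:ℤ)+3) := by
    rw [h10]; exact degLe_add (degLe_sg _ _ _ (by push_cast; omega)) hr10.degLe
  have H11 : DegLe (M 1 1) (2*(n:ℤ)+2) := by
    rw [h11]; exact degLe_add (degLe_sg _ _ _ (by push_cast; omega)) hr11.degLe
  have hc01 : DegLe (sg ((1:ℤ),(0:ℕ)) (-1)) 1 := degLe_sg _ _ _ (by norm_num)
  have hc10 : DegLe (sg ((-1:ℤ),(1:ℕ)) (-1)) 0 := degLe_sg _ _ _ (by norm_num)
  have hc11 : DegLe (sg ((0:ℤ),(1:ℕ)) 1 + 1) 1 :=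
    degLe_add (degLe_sg _ _ _ (by norm_num)) ((degLe_one.degLt (by norm_num)).degLe)
  have hd01 : DegLe (sg ((-1:ℤ),(0:ℕ)) 1) (-1) := degLe_sg _ _ _ (by norm_num)
  have hd10 : DegLe (sg ((1:ℤ),(1:ℕ)) 1) 2 := degLe_sg _ _ _ (by norm_num)
  have hL : DegLe (sg ((0:ℤ),(2*n+2:ℕ)) 1) (2*(n:ℤ)+2) := degLe_sg _ _ _ (by push_cast; omega)
  refine ⟨⟨M 0 0 + M 0 1 * sg (1,1) 1 + sg (1,0) (-1) * M 1 0 +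
      sg (1,0) (-1) * r11 * sg (1,1) 1, ?_, ?_⟩,
    ⟨M 0 0 * sg (-1,0) 1 + M 0 1 * (sg (0,1) 1 + 1) + sg (1,0) (-1) * M 1 0 * sg (-1,0) 1 +
      sg (1,0) (-1) * sg (0,2*n+2) 1 + sg (1,0) (-1) * r11 * (sg (0,1) 1 + 1), ?_, ?_⟩,
    ⟨sg (-1,1) (-1) * M 0 0 + sg (-1,1) (-1) * M 0 1 * sg (1,1) 1 + (sg (0,1) 1 + 1) * M 1 0 +
      sg (0,2*n+2) 1 * sg (1,1) 1 + (sg (0,1) 1 + 1) * r11 * sg (1,1) 1, ?_, ?_⟩,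
    ⟨sg (-1,1) (-1) * M 0 0 * sg (-1,0) 1 + sg (-1,1) (-1) * M 0 1 * (sg (0,1) 1 + 1) +
      (sg (0,1) 1 + 1) * M 1 0 * sg (-1,0) 1 + sg (0,1) 1 * sg (0,2*n+2) 1 +
      sg (0,2*n+2) 1 * sg (0,1) 1 + sg (0,2*n+2) 1 +
      (sg (0,1) 1 + 1) * r11 * (sg (0,1) 1 + 1), ?_, ?_⟩⟩
  · rw [show (2*(n+1)+1 : ℕ) = 2*n+3 from by ring]
    rw [mul3_apply, C_eq', D_eq']
    simp only [Matrix.of_apply, Matrix.cons_val_zero, Matrix.cons_val_one, Matrix.head_cons,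
      Matrix.cons_val', Matrix.empty_val', Matrix.cons_val_fin_one, Matrix.head_fin_const]
    rw [h11]
    linear_combination (sg_key3 (by ring) (by ring) (by ring) :
      sg (1,0) (-1) * sg (0,2*n+2) 1 * sg (1,1) 1 = sg (2, 2*n+3) (-1))
  · rw [show (2*((n:ℕ)+1 : ℕ):ℤ)+3 = 2*(n:ℤ)+5 from by push_cast; ring]
    refine degLt_add (degLt_add (degLt_add ?_ ?_) ?_) ?_
    · exact H00.degLt (by omega)
    · exact (degLe_mul H01 hd10).degLt (by omega)
    · exact (degLe_mul hc01 H10).degLt (by omega)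
    · exact (degLt_mul_lt_le (degLt_mul_le_lt hc01 hr11) hd10).mono (by omega)
  · rw [show (2*(n+1)+1 : ℕ) = 2*n+3 from by ring]
    rw [mul3_apply, C_eq', D_eq']
    simp only [Matrix.of_apply, Matrix.cons_val_zero, Matrix.cons_val_one, Matrix.head_cons,
      Matrix.cons_val', Matrix.empty_val', Matrix.cons_val_fin_one, Matrix.head_fin_const]
    rw [h11]
    linear_combination (sg_key3 (by ring) (by ring) (by ring) :
      sg (1,0) (-1) * sg (0,2*n+2) 1 * sg (0,1) 1 = sg (1, 2*n+3) (-1))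
  · rw [show (2*((n:ℕ)+1 : ℕ):ℤ)+2 = 2*(n:ℤ)+4 from by push_cast; ring]
    refine degLt_add (degLt_add (degLt_add (degLt_add ?_ ?_) ?_) ?_) ?_
    · exact (degLe_mul H00 hd01).degLt (by omega)
    · exact (degLe_mul H01 hc11).degLt (by omega)
    · exact (degLe_mul (degLe_mul hc01 H10) hd01).degLt (by omega)
    · exact (degLe_mul hc01 hL).degLt (by omega)
    · exact (degLt_mul_lt_le (degLt_mul_le_lt hc01 hr11) hc11).mono (by omega)
  · rw [show (2*(n+1)+2 : ℕ) = 2*n+4 from by ring]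
    rw [mul3_apply, C_eq', D_eq']
    simp only [Matrix.of_apply, Matrix.cons_val_zero, Matrix.cons_val_one, Matrix.head_cons,
      Matrix.cons_val', Matrix.empty_val', Matrix.cons_val_fin_one, Matrix.head_fin_const]
    rw [h11]
    linear_combination (sg_key3 (by ring) (by ring) (by ring) :
      sg (0,1) 1 * sg (0,2*n+2) 1 * sg (1,1) 1 = sg (1, 2*n+4) 1)
  · rw [show (2*((n:ℕ)+1 : ℕ):ℤ)+3 = 2*(n:ℤ)+5 from by push_cast; ring]
    refine degLt_add (degLt_add (degLt_add (degLt_add ?_ ?_) ?_) ?_) ?_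
    · exact (degLe_mul hc10 H00).degLt (by omega)
    · exact (degLe_mul (degLe_mul hc10 H01) hd10).degLt (by omega)
    · exact (degLe_mul hc11 H10).degLt (by omega)
    · exact (degLe_mul hL hd10).degLt (by omega)
    · exact (degLt_mul_lt_le (degLt_mul_le_lt hc11 hr11) hd10).mono (by omega)
  · rw [show (2*(n+1)+2 : ℕ) = 2*n+4 from by ring]
    rw [mul3_apply, C_eq', D_eq']
    simp only [Matrix.of_apply, Matrix.cons_val_zero, Matrix.cons_val_one, Matrix.head_cons,
      Matrix.cons_val', Matrix.empty_val', Matrix.cons_val_fin_one, Matrix.head_fin_const]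
    rw [h11]
    linear_combination (sg_key3 (by ring) (by ring) (by ring) :
      sg (0,1) 1 * sg (0,2*n+2) 1 * sg (0,1) 1 = sg (0, 2*n+4) 1)
  · rw [show (2*((n:ℕ)+1 : ℕ):ℤ)+2 = 2*(n:ℤ)+4 from by push_cast; ring]
    refine degLt_add (degLt_add (degLt_add (degLt_add (degLt_add (degLt_add ?_ ?_) ?_) ?_) ?_) ?_) ?_
    · exact (degLe_mul (degLe_mul hc10 H00) hd01).degLt (by omega)
    · exact (degLe_mul (degLe_mul hc10 H01) hc11).degLt (by omega)
    · exact (degLe_mul (degLe_mul hc11 H10) hd01).degLt (by omega)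
    · exact (degLe_mul (degLe_sg 0 1 1 (d := 1) (by norm_num)) hL).degLt (by omega)
    · exact (degLe_mul hL (degLe_sg 0 1 1 (d := 1) (by norm_num))).degLt (by omega)
    · exact hL.degLt (by omega)
    · exact (degLt_mul_lt_le (degLt_mul_le_lt hc11 hr11) hc11).mono (by omega)

lemma good_all (n : ℕ) : Good n (W (n+1)) := by
  induction n with
  | zero => exact good_base
  | succ k ih =>
    rw [W_succ]
    exact good_step k _ ih


theorem stmt_5' (m : ℕ) (hm : 1 ≤ m) :
    deg ((W m) 0 0) = (2 * (m : ℤ) + 1 : ℤ) ∧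
    deg ((W m) 1 0) = (2 * (m : ℤ) + 1 : ℤ) ∧
    deg ((W m) 0 1) = (2 * (m : ℤ) : ℤ) ∧
    deg ((W m) 1 1) = (2 * (m : ℤ) : ℤ) ∧
    deg ((W m).trace) = (2 * (m : ℤ) + 1 : ℤ) := by
  obtain ⟨n, rfl⟩ : ∃ n, m = n + 1 := ⟨m - 1, by omega⟩
  obtain ⟨⟨r00, h00, hr00⟩, ⟨r01, h01, hr01⟩, ⟨r10, h10, hr10⟩, ⟨r11, h11, hr11⟩⟩ := good_all n
  have H11 : DegLe (W (n+1) 1 1) (2*(n:ℤ)+2) := by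
    rw [h11]; exact degLe_add (degLe_sg _ _ _ (by push_cast; omega)) hr11.degLe
  refine ⟨?_, ?_, ?_, ?_, ?_⟩
  · rw [h00]
    exact deg_eq_s5 (by norm_num) (by
      rw [show ((2:ℤ) + (((2*n+1 : ℕ)):ℤ)) = 2*(n:ℤ)+3 from by push_cast; ring]; exact hr00)
      (by push_cast; ring)
  · rw [h10]
    exact deg_eq_s5 (by norm_num) (by
      rw [show ((1:ℤ) + (((2*n+2 : ℕ)):ℤ)) = 2*(n:ℤ)+3 from by push_cast; ring]; exact hr10)
      (by push_cast; ring)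
  · rw [h01]
    exact deg_eq_s5 (by norm_num) (by
      rw [show ((1:ℤ) + (((2*n+1 : ℕ)):ℤ)) = 2*(n:ℤ)+2 from by push_cast; ring]; exact hr01)
      (by push_cast; ring)
  · rw [h11]
    exact deg_eq_s5 (by norm_num) (by
      rw [show ((0:ℤ) + (((2*n+2 : ℕ)):ℤ)) = 2*(n:ℤ)+2 from by push_cast; ring]; exact hr11)
      (by push_cast; ring)
  · rw [Matrix.trace_fin_two, h00]
    rw [show sg (2, 2*n+1) (-1) + r00 + W (n+1) 1 1
        = sg (2, 2*n+1) (-1) + (r00 + W (n+1) 1 1) from by ring]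
    exact deg_eq_s5 (by norm_num) (by
      rw [show ((2:ℤ) + (((2*n+1 : ℕ)):ℤ)) = 2*(n:ℤ)+3 from by push_cast; ring]
      exact degLt_add hr00 (H11.degLt (by omega)))
      (by push_cast; ring)


/-- Degrees of the entries of `W_m = (B A⁻¹)^m (B⁻¹ A)^m`:
`deg w^{11} = deg w^{21} = 2m + 1`, `deg w^{12} = deg w^{22} = 2m`;
in particular `deg(tr W_m) = 2m + 1`. -/
theorem stmt_5 (m : ℕ) (hm : 1 ≤ m) :
    deg ((W m) 0 0) = (2 * (m : ℤ) + 1 : ℤ) ∧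
    deg ((W m) 1 0) = (2 * (m : ℤ) + 1 : ℤ) ∧
    deg ((W m) 0 1) = (2 * (m : ℤ) : ℤ) ∧
    deg ((W m) 1 1) = (2 * (m : ℤ) : ℤ) ∧
    deg ((W m).trace) = (2 * (m : ℤ) + 1 : ℤ) :=
  stmt_5' m hm
end
end

section
/- Let phi(x,y) = 1 - 4x^2 + 2x^4 + (2 - x^2 - x^4) y - (1 - 2x^2) y^2 - y^3 and psi_2(x,y) = 2x^2 - x^2 y + y^2. Then the set {(x,y) in C^2 : phi(x,y) = 0 and psi_2(x,y) = 1} equals {(1/\sqrt{2}, 1/2), (-1/\sqrt{2}, 1/2)}, and the set {(x,y) in C^2 : phi(x,y) = 0 and psi_2(x,y) = 0} equals {(i/\sqrt{6}, -2/3), (-i/\sqrt{6}, -2/3)}. -/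
open Complex

lemma sqrt2_sq : ((Real.sqrt 2 : ℝ) : ℂ) ^ 2 = 2 := by
  norm_cast
  rw [Real.sq_sqrt (by norm_num : (0:ℝ) ≤ 2)]

lemma sqrt6_sq : ((Real.sqrt 6 : ℝ) : ℂ) ^ 2 = 6 := by
  norm_cast
  rw [Real.sq_sqrt (by norm_num : (0:ℝ) ≤ 6)]

lemma sqrt2_ne : ((Real.sqrt 2 : ℝ) : ℂ) ≠ 0 := by
  intro h
  have := sqrt2_sq
  rw [h] at this
  norm_num at this

lemma sqrt6_ne : ((Real.sqrt 6 : ℝ) : ℂ) ≠ 0 := by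
  intro h
  have := sqrt6_sq
  rw [h] at this
  norm_num at this

/-- For the knot `5₂ = K(7,3)`, with Riley polynomial
`φ(x,y) = 1 - 4x² + 2x⁴ + (2 - x² - x⁴)y - (1 - 2x²)y² - y³` and top coefficient
`ψ₂(x,y) = 2x² - x²y + y²` of the twisted Alexander polynomial:
`{φ = 0, ψ₂ = 1} = {(±1/√2, 1/2)}` and `{φ = 0, ψ₂ = 0} = {(±i/√6, -2/3)}`. -/
theorem stmt_18 :
    ({p : ℂ × ℂ |
        1 - 4 * p.1 ^ 2 + 2 * p.1 ^ 4 + (2 - p.1 ^ 2 - p.1 ^ 4) * p.2 -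
            (1 - 2 * p.1 ^ 2) * p.2 ^ 2 - p.2 ^ 3 = 0 ∧
        2 * p.1 ^ 2 - p.1 ^ 2 * p.2 + p.2 ^ 2 = 1} =
      {((1 / (Real.sqrt 2 : ℂ)), (1 / 2 : ℂ)), (-(1 / (Real.sqrt 2 : ℂ)), (1 / 2 : ℂ))}) ∧
    ({p : ℂ × ℂ |
        1 - 4 * p.1 ^ 2 + 2 * p.1 ^ 4 + (2 - p.1 ^ 2 - p.1 ^ 4) * p.2 -
            (1 - 2 * p.1 ^ 2) * p.2 ^ 2 - p.2 ^ 3 = 0 ∧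
        2 * p.1 ^ 2 - p.1 ^ 2 * p.2 + p.2 ^ 2 = 0} =
      {((I / (Real.sqrt 6 : ℂ)), (-2 / 3 : ℂ)), (-(I / (Real.sqrt 6 : ℂ)), (-2 / 3 : ℂ))}) := by
  constructor
  · ext ⟨x, y⟩
    simp only [Set.mem_setOf_eq, Set.mem_insert_iff, Set.mem_singleton_iff, Prod.mk.injEq]
    constructor
    · rintro ⟨h1, h2⟩
      have key : (2 * y - 1) * (y - 2) = 0 := by
        linear_combination (-(2 - y) ^ 2) * h1 +
          ((-4 - y + 2 * y ^ 2) * (2 - y) + (2 - y) * (x ^ 2 * (2 - y) + (1 - y ^ 2))) * h2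
      have hy2 : y ≠ 2 := by
        intro h
        rw [h] at h2
        have : (4 : ℂ) = 1 := by linear_combination h2
        norm_num at this
      have hy : y = 1 / 2 := by
        rcases mul_eq_zero.1 key with h | h
        · linear_combination h / 2
        · exact absurd (by linear_combination h) hy2
      subst hy
      have hx2 : x ^ 2 = 1 / 2 := by linear_combination (2/3 : ℂ) * h2
      have hc : (1 / (Real.sqrt 2 : ℂ)) ^ 2 = 1 / 2 := by
        rw [div_pow, one_pow, sqrt2_sq]
      have hfac : (x - 1 / (Real.sqrt 2 : ℂ)) * (x + 1 / (Real.sqrt 2 : ℂ)) = 0 := by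
        linear_combination hx2 - hc
      rcases mul_eq_zero.1 hfac with h | h
      · left; exact ⟨by linear_combination h, rfl⟩
      · right; exact ⟨by linear_combination h, rfl⟩
    · rintro (⟨hx, hy⟩ | ⟨hx, hy⟩) <;> subst hx <;> subst hy <;>
      · have hc : (1 / (Real.sqrt 2 : ℂ)) ^ 2 = 1 / 2 := by
          rw [div_pow, one_pow, sqrt2_sq]
        exact ⟨by linear_combination ((3/2 : ℂ) * (1 / (Real.sqrt 2 : ℂ)) ^ 2 - 13/4) * hc,
          by linear_combination (3/2 : ℂ) * hc⟩
  · ext ⟨x, y⟩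
    simp only [Set.mem_setOf_eq, Set.mem_insert_iff, Set.mem_singleton_iff, Prod.mk.injEq]
    constructor
    · rintro ⟨h1, h2⟩
      have key : (3 * y + 2) * (y - 2) = 0 := by
        linear_combination (-(2 - y) ^ 2) * h1 +
          ((-4 - y + 2 * y ^ 2) * (2 - y) + (2 - y) * (x ^ 2 * (2 - y) + (0 - y ^ 2))) * h2
      have hy2 : y ≠ 2 := by
        intro h
        rw [h] at h2
        have : (4 : ℂ) = 0 := by linear_combination h2
        norm_num at this
      have hy : y = -2 / 3 := by
        rcases mul_eq_zero.1 key with h | h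
        · linear_combination h / 3
        · exact absurd (by linear_combination h) hy2
      subst hy
      have hx2 : x ^ 2 = -1 / 6 := by linear_combination (3/8 : ℂ) * h2
      have hd : (I / (Real.sqrt 6 : ℂ)) ^ 2 = -1 / 6 := by
        rw [div_pow, Complex.I_sq, sqrt6_sq]
      have hfac : (x - I / (Real.sqrt 6 : ℂ)) * (x + I / (Real.sqrt 6 : ℂ)) = 0 := by
        linear_combination hx2 - hd
      rcases mul_eq_zero.1 hfac with h | h
      · left; exact ⟨by linear_combination h, rfl⟩
      · right; exact ⟨by linear_combination h, rfl⟩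
    · rintro (⟨hx, hy⟩ | ⟨hx, hy⟩) <;> subst hx <;> subst hy <;>
      · have hd : (I / (Real.sqrt 6 : ℂ)) ^ 2 = -1 / 6 := by
          rw [div_pow, Complex.I_sq, sqrt6_sq]
        exact ⟨by linear_combination ((8/3 : ℂ) * (I / (Real.sqrt 6 : ℂ)) ^ 2 - 26/9) * hd,
          by linear_combination (8/3 : ℂ) * hd⟩
end
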